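/- Let n ≥ 1 be an integer and ω : ℝ → ℂ a continuous 2π-periodic function; write ω̂(m) := ∫₀^{2π} ω(α) e^{−imα} dα for m ∈ ℤ. Then for every z ∈ ℂ, ∫₀^{2π} ω(α) · (|z|² + 1 − conj(z)·e^{iα} − z·e^{−iα})^{n−1} dα = Σ_{p=0}^{n−1} Σ_{q=0}^{n−1} (−1)^{p+q} · C(n−1,p) · C(n−1,q) · ω̂(p−q) · z^p · conj(z)^q, where C(·,·) denotes binomial coefficients. (In particular, (1−|z|²)^{n−1} · 𝒫_{−n}(ω)(z) is a polynomial in z and conj(z) of bidegree at most (n−1, n−1) whose coefficients are the Fourier coefficients ω̂(m) with |m| ≤ n−1, up to nonzero binomial constants.) -/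

import Mathlib

open Complex Real

/-- The `m`-th Fourier coefficient `ω̂(m) = ∫₀^{2π} ω(α) e^{−imα} dα`. -/
noncomputable def fourierCoeffInt (ω : ℝ → ℂ) (m : ℤ) : ℂ :=
  ∫ α in (0 : ℝ)..(2 * Real.pi), ω α * Complex.exp (-(m : ℂ) * α * Complex.I)

/-- The integral `∫₀^{2π} ω(α) (|z|² + 1 − conj z·e^{iα} − z·e^{−iα})^{n−1} dα`, i.e.
`(1−|z|²)^{n−1} 𝒫_{−n}(ω)(z)`. -/
noncomputable def poissonInt (n : ℕ) (ω : ℝ → ℂ) (z : ℂ) : ℂ :=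
  ∫ α in (0 : ℝ)..(2 * Real.pi),
    ω α * (((‖z‖ ^ 2 : ℝ) : ℂ) + 1 - (starRingEnd ℂ) z * Complex.exp (α * Complex.I)
            - z * Complex.exp (-(α * Complex.I))) ^ (n - 1)

lemma exp_split (p q : ℕ) (α : ℝ) :
    Complex.exp (((q : ℂ) - p) * α * Complex.I)
      = Complex.exp (α * Complex.I) ^ q * Complex.exp (-(α * Complex.I)) ^ p := by
  rw [← Complex.exp_nat_mul, ← Complex.exp_nat_mul, ← Complex.exp_add]
  congr 1; ring

lemma one_sub_pow' (w : ℂ) (m : ℕ) :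
    (1 - w) ^ m = ∑ k ∈ Finset.range (m + 1), (-1 : ℂ) ^ k * (m.choose k : ℂ) * w ^ k := by
  rw [sub_eq_add_neg, add_comm, add_pow]
  refine Finset.sum_congr rfl fun k _ => ?_
  rw [one_pow]; ring

lemma key (n : ℕ) (hn : 1 ≤ n) (z : ℂ) (α : ℝ) :
    (((‖z‖ ^ 2 : ℝ) : ℂ) + 1 - (starRingEnd ℂ) z * Complex.exp (α * Complex.I)
      - z * Complex.exp (-(α * Complex.I))) ^ (n - 1)
    = ∑ p ∈ Finset.range n, ∑ q ∈ Finset.range n,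
        (-1 : ℂ) ^ (p + q) * ((n - 1).choose p : ℂ) * ((n - 1).choose q : ℂ)
          * z ^ p * ((starRingEnd ℂ) z) ^ q
          * Complex.exp (((q : ℂ) - p) * α * Complex.I) := by
  have hsq : ((‖z‖ ^ 2 : ℝ) : ℂ) = z * (starRingEnd ℂ) z := by
    rw [Complex.mul_conj]
    norm_cast
    simp [Complex.normSq_eq_norm_sq]
  have hee : Complex.exp (-(α * Complex.I)) * Complex.exp (α * Complex.I) = 1 := by
    rw [← Complex.exp_add]; simp
  have hfac : ((‖z‖ ^ 2 : ℝ) : ℂ) + 1 - (starRingEnd ℂ) z * Complex.exp (α * Complex.I)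
      - z * Complex.exp (-(α * Complex.I))
      = (1 - z * Complex.exp (-(α * Complex.I)))
          * (1 - (starRingEnd ℂ) z * Complex.exp (α * Complex.I)) := by
    rw [hsq]
    linear_combination (-(z * (starRingEnd ℂ) z)) * hee
  have hm : n - 1 + 1 = n := by omega
  rw [hfac, mul_pow, one_sub_pow', one_sub_pow', hm, Finset.sum_mul_sum]
  refine Finset.sum_congr rfl fun p _ => Finset.sum_congr rfl fun q _ => ?_
  rw [exp_split]
  ring

theorem poissonInt_eq_fourier_expansion (n : ℕ) (hn : 1 ≤ n) (ω : ℝ → ℂ)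
    (hcont : Continuous ω) (hper : ∀ α : ℝ, ω (α + 2 * Real.pi) = ω α) :
    ∀ z : ℂ, poissonInt n ω z
      = ∑ p ∈ Finset.range n, ∑ q ∈ Finset.range n,
          (-1 : ℂ) ^ (p + q) * ((n - 1).choose p : ℂ) * ((n - 1).choose q : ℂ)
            * fourierCoeffInt ω ((p : ℤ) - (q : ℤ)) * z ^ p * ((starRingEnd ℂ) z) ^ q := by
  intro z
  set c : ℕ → ℕ → ℂ := fun p q =>
    (-1 : ℂ) ^ (p + q) * ((n - 1).choose p : ℂ) * ((n - 1).choose q : ℂ)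
      * z ^ p * ((starRingEnd ℂ) z) ^ q with hc
  have hint : ∀ p q : ℕ, IntervalIntegrable
      (fun α : ℝ => c p q * (ω α * Complex.exp (((q : ℂ) - p) * α * Complex.I)))
      MeasureTheory.volume 0 (2 * Real.pi) := by
    intro p q
    apply Continuous.intervalIntegrable
    refine continuous_const.mul (hcont.mul (Complex.continuous_exp.comp ?_))
    exact (continuous_const.mul Complex.continuous_ofReal).mul continuous_const
  have step1 : poissonInt n ω z
      = ∫ α in (0 : ℝ)..(2 * Real.pi), ∑ p ∈ Finset.range n, ∑ q ∈ Finset.range n,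
          c p q * (ω α * Complex.exp (((q : ℂ) - p) * α * Complex.I)) := by
    unfold poissonInt
    apply intervalIntegral.integral_congr
    intro α _
    simp only [key n hn z α, Finset.mul_sum]
    refine Finset.sum_congr rfl fun p _ => Finset.sum_congr rfl fun q _ => ?_
    simp only [hc]; ring
  rw [step1, intervalIntegral.integral_finset_sum]
  · refine Finset.sum_congr rfl fun p _ => ?_
    rw [intervalIntegral.integral_finset_sum (fun q _ => hint p q)]
    refine Finset.sum_congr rfl fun q _ => ?_
    rw [intervalIntegral.integral_const_mul]
    have hfc : fourierCoeffInt ω ((p : ℤ) - (q : ℤ))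
        = ∫ α in (0 : ℝ)..(2 * Real.pi),
            ω α * Complex.exp (((q : ℂ) - p) * α * Complex.I) := by
      unfold fourierCoeffInt
      apply intervalIntegral.integral_congr
      intro α _
      simp only []
      congr 2
      push_cast
      ring
    rw [← hfc, hc]
    ring
  · intro p _
    apply Continuous.intervalIntegrable
    apply continuous_finset_sum
    intro q _
    refine continuous_const.mul (hcont.mul (Complex.continuous_exp.comp ?_))
    exact (continuous_const.mul Complex.continuous_ofReal).mul continuous_const
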